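/- Let f be a form of degree d in n variables over k, and suppose f = g₁ + g₂ where 1 ≤ a < n, g₁ is a form of degree d involving only the variables x_1,…,x_a and g₂ is a form of degree d involving only x_{a+1},…,x_n. Then the block projection matrices E₁ = diag(I_a, 0) and E₂ = diag(0, I_{n−a}) both lie in the center Z(f); moreover E₁² = E₁, E₂² = E₂, E₁E₂ = 0 and E₁ + E₂ = I_n. -/

import Mathlib

open MvPolynomial Matrix

/-- The Hessian matrix of a multivariate polynomial. -/
noncomputable def hessian {k : Type*} [Field k] {σ : Type*} (f : MvPolynomial σ k) :
    Matrix σ σ (MvPolynomial σ k) :=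
  Matrix.of fun i j => pderiv i (pderiv j f)

/-- The center of a form `f`. -/
def center {k : Type*} [Field k] {σ : Type*} [Fintype σ] (f : MvPolynomial σ k) :
    Set (Matrix σ σ k) :=
  {X | (hessian f * X.map (C : k → MvPolynomial σ k))ᵀ
        = hessian f * X.map (C : k → MvPolynomial σ k)}

lemma pderiv_pderiv_comm {k : Type*} [CommSemiring k] {σ : Type*} [DecidableEq σ]
    (i j : σ) (f : MvPolynomial σ k) :
    pderiv i (pderiv j f) = pderiv j (pderiv i f) := by
  induction f using MvPolynomial.induction_on' with
  | add p q hp hq => simp [hp, hq]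
  | monomial s c =>
    by_cases h : i = j
    · subst h; rfl
    · simp only [pderiv_monomial, Finsupp.tsub_apply, Finsupp.single_apply,
        if_neg h, if_neg (Ne.symm h), tsub_zero]
      rw [tsub_right_comm, mul_right_comm]

/-- if `f = g₁ + g₂` is a direct sum with `g₁` in the variables
`x_1, …, x_a` and `g₂` in the variables `x_{a+1}, …, x_n`, then the block projections
`E₁ = diag(I_a, 0)` and `E₂ = diag(0, I_{n-a})` are orthogonal idempotents in the center,
summing to the identity. -/
theorem block_projections_mem_center {k : Type*} [Field k] {n d a : ℕ} (hd : 3 ≤ d)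
    (hchar : ringChar k = 0 ∨ d < ringChar k) (ha : 1 ≤ a) (han : a < n)
    (f g₁ g₂ : MvPolynomial (Fin n) k)
    (hg₁ : g₁.IsHomogeneous d) (hg₂ : g₂.IsHomogeneous d)
    (hv₁ : ∀ i ∈ g₁.vars, (i : ℕ) < a) (hv₂ : ∀ i ∈ g₂.vars, a ≤ (i : ℕ))
    (hsum : f = g₁ + g₂) :
    let E₁ : Matrix (Fin n) (Fin n) k := Matrix.diagonal fun i => if (i : ℕ) < a then 1 else 0
    let E₂ : Matrix (Fin n) (Fin n) k := Matrix.diagonal fun i => if (i : ℕ) < a then 0 else 1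
    E₁ ∈ center f ∧ E₂ ∈ center f ∧
      E₁ * E₁ = E₁ ∧ E₂ * E₂ = E₂ ∧ E₁ * E₂ = 0 ∧ E₁ + E₂ = 1 := by
  intro E₁ E₂
  have hmix : ∀ i j : Fin n, (i : ℕ) < a → a ≤ (j : ℕ) → pderiv i (pderiv j f) = 0 := by
    intro i j hi hj
    rw [hsum, map_add, map_add]
    rw [pderiv_eq_zero_of_notMem_vars (fun h => absurd (hv₁ j h) (not_lt.2 hj)),
      map_zero, zero_add, pderiv_pderiv_comm,
      pderiv_eq_zero_of_notMem_vars (fun h => absurd (hv₂ i h) (not_le.2 hi)), map_zero]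
  have hcen : ∀ c : Fin n → k,
      (∀ i j : Fin n, pderiv i (pderiv j f) * C (c j) = pderiv i (pderiv j f) * C (c i)) →
      Matrix.diagonal c ∈ center f := by
    intro c hc
    show _ = _
    have hmap : (Matrix.diagonal c).map (C : k → MvPolynomial (Fin n) k)
        = Matrix.diagonal fun i => C (c i) := by
      ext i j
      by_cases h : i = j <;> simp [Matrix.diagonal_apply, Matrix.map_apply, h]
    rw [hmap]
    ext i j
    simp only [Matrix.transpose_apply, Matrix.mul_diagonal, hessian, Matrix.of_apply]
    rw [pderiv_pderiv_comm, hc]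
  have hE₁ : E₁ ∈ center f := by
    apply hcen
    intro i j
    rcases lt_or_ge (i : ℕ) a with hi | hi <;> rcases lt_or_ge (j : ℕ) a with hj | hj
    · simp [hi, hj]
    · rw [hmix i j hi hj]; ring
    · rw [pderiv_pderiv_comm, hmix j i hj hi]; ring
    · simp [not_lt.2 hi, not_lt.2 hj]
  have hE₂ : E₂ ∈ center f := by
    apply hcen
    intro i j
    rcases lt_or_ge (i : ℕ) a with hi | hi <;> rcases lt_or_ge (j : ℕ) a with hj | hj
    · simp [hi, hj]
    · rw [hmix i j hi hj]; ring
    · rw [pderiv_pderiv_comm, hmix j i hj hi]; ring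
    · simp [not_lt.2 hi, not_lt.2 hj]
  refine ⟨hE₁, hE₂, ?_, ?_, ?_, ?_⟩ <;>
  · simp only [E₁, E₂, Matrix.diagonal_mul_diagonal, Matrix.diagonal_add]
    ext i j
    by_cases h : (i : ℕ) < a <;>
      simp [Matrix.diagonal_apply, Matrix.one_apply, Matrix.zero_apply, h]
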